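/- Let X_1, ..., X_{n+1} be exchangeable random variables with values in a measurable space Ω, and let g: Ω → ℝ be a measurable function. Define σ_i = g(X_i) for i = 1, ..., n+1 and the p-value π = (1/(n+1)) · #{i ∈ {1,...,n+1} : σ_i ≤ σ_{n+1}}. Then for any α ∈ (0,1), P(π ≥ α) ≥ 1 - α. -/

import Mathlib

open MeasureTheory Finset
open scoped ENNReal NNReal

namespace ConformalAux

variable {S : Type*}

/-- rank count -/
noncomputable def rk (g : S → ℝ) (n : ℕ) (v : Fin (n+1) → S) (j : Fin (n+1)) : ℕ :=
  (univ.filter fun i => g (v i) ≤ g (v j)).card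

lemma rk_cast_eq (g : S → ℝ) (n : ℕ) (v : Fin (n+1) → S) (j : Fin (n+1)) :
    ((rk g n v j : ℕ) : ℝ) = ∑ i : Fin (n+1), if g (v i) ≤ g (v j) then (1:ℝ) else 0 := by
  classical
  rw [rk, Finset.card_filter]
  push_cast
  apply Finset.sum_congr rfl
  intro i _
  split <;> simp

lemma rk_perm (g : S → ℝ) (n : ℕ) (v : Fin (n+1) → S) (e : Equiv.Perm (Fin (n+1)))
    (j : Fin (n+1)) :
    rk g n (fun i => v (e i)) j = rk g n v (e j) := by
  unfold rk
  apply Finset.card_bij (fun i _ => e i)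
  · intro a ha; simp only [mem_filter, mem_univ, true_and] at ha ⊢; exact ha
  · intro a _ b _ h; exact e.injective h
  · intro b hb
    refine ⟨e.symm b, ?_, by simp⟩
    simp only [mem_filter, mem_univ, true_and] at hb ⊢
    simpa using hb

lemma count_small (g : S → ℝ) (n : ℕ) (v : Fin (n+1) → S) {c : ℝ} (hc : 0 < c) :
    ((univ.filter fun j => ((rk g n v j : ℝ) < c)).card : ℝ) < c := by
  set T := univ.filter fun j => ((rk g n v j : ℝ) < c) with hT
  rcases T.eq_empty_or_nonempty with h | h
  · simp [h, hc]
  · obtain ⟨j, hjT, hj⟩ := T.exists_max_image (fun j => g (v j)) h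
    have hsub : T ⊆ univ.filter fun i => g (v i) ≤ g (v j) := by
      intro i hi; simp only [mem_filter, mem_univ, true_and]; exact hj i hi
    have h1 : (T.card : ℝ) ≤ (rk g n v j : ℝ) := by
      exact_mod_cast Finset.card_le_card hsub
    have hjc : (rk g n v j : ℝ) < c := by
      simp only [hT, mem_filter, mem_univ, true_and] at hjT; exact hjT
    linarith

end ConformalAux

/-- Validity of the conformal p-value: for exchangeable `X 0, ..., X n` with values in a
measurable space and a measurable score `g`, the p-value
`π = #{i : g (X i) ≤ g (X (last))} / (n+1)` satisfies `P(π ≥ α) ≥ 1 - α`. -/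
theorem stmt1 {Ω S : Type*} [MeasurableSpace Ω] [MeasurableSpace S]
    (μ : Measure Ω) [IsProbabilityMeasure μ]
    (n : ℕ) (X : Fin (n + 1) → Ω → S) (hmeas : ∀ i, Measurable (X i))
    (hexch : ∀ e : Equiv.Perm (Fin (n + 1)),
      Measure.map (fun ω (i : Fin (n + 1)) => X (e i) ω) μ =
        Measure.map (fun ω (i : Fin (n + 1)) => X i ω) μ)
    (g : S → ℝ) (hg : Measurable g)
    (α : ℝ) (hα : α ∈ Set.Ioo (0 : ℝ) 1) :
    ENNReal.ofReal (1 - α) ≤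
      μ {ω | α ≤ ((Finset.univ.filter fun i =>
          g (X i ω) ≤ g (X (Fin.last n) ω)).card : ℝ) / (n + 1)} := by
  classical
  obtain ⟨hα0, hα1⟩ := hα
  set c : ℝ := α * ((n : ℝ) + 1) with hc
  have hn1 : (0:ℝ) < (n:ℝ) + 1 := by positivity
  have hc0 : 0 < c := by positivity
  set Y : Ω → Fin (n+1) → S := fun ω i => X i ω with hYdef
  have hY : Measurable Y := measurable_pi_lambda _ hmeas
  set B : Fin (n+1) → Set (Fin (n+1) → S) :=
    fun j => {v | (ConformalAux.rk g n v j : ℝ) < c} with hBdef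
  have hFmeas : ∀ j, Measurable fun v : Fin (n+1) → S => (ConformalAux.rk g n v j : ℝ) := by
    intro j
    have heq : (fun v : Fin (n+1) → S => (ConformalAux.rk g n v j : ℝ)) =
        fun v => ∑ i : Fin (n+1), if g (v i) ≤ g (v j) then (1:ℝ) else 0 := by
      funext v
      exact ConformalAux.rk_cast_eq g n v j
    rw [heq]
    exact Finset.measurable_sum _ fun i _ =>
      Measurable.ite (measurableSet_le (hg.comp (measurable_pi_apply i))
        (hg.comp (measurable_pi_apply j))) measurable_const measurable_const
  have hB : ∀ j, MeasurableSet (B j) := fun j => measurableSet_lt (hFmeas j) measurable_const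
  -- exchangeability: all the events have equal measure
  have key : ∀ j, μ (Y ⁻¹' B j) = μ (Y ⁻¹' B (Fin.last n)) := by
    intro j
    have h := hexch (Equiv.swap j (Fin.last n))
    have hYe : Measurable fun ω (i : Fin (n+1)) => X (Equiv.swap j (Fin.last n) i) ω :=
      measurable_pi_lambda _ fun i => hmeas _
    have h1 : μ ((fun ω (i : Fin (n+1)) => X (Equiv.swap j (Fin.last n) i) ω) ⁻¹'
          B (Fin.last n)) = μ (Y ⁻¹' B (Fin.last n)) := by
      rw [← Measure.map_apply hYe (hB _), ← Measure.map_apply hY (hB _), h]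
    rw [← h1]
    congr 1
    ext ω
    simp only [Set.mem_preimage, hBdef, Set.mem_setOf_eq]
    have h2 : (fun i => X (Equiv.swap j (Fin.last n) i) ω) =
        (fun i => (Y ω) (Equiv.swap j (Fin.last n) i)) := rfl
    rw [h2, ConformalAux.rk_perm, Equiv.swap_apply_right]
  -- sum of measures as an integral of the count
  have hsum : ∑ j : Fin (n+1), μ (Y ⁻¹' B j) =
      ∫⁻ ω, ((univ.filter fun j : Fin (n+1) => Y ω ∈ B j).card : ℝ≥0∞) ∂μ := by
    have hind : ∀ j : Fin (n+1), μ (Y ⁻¹' B j) =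
        ∫⁻ ω, (Y ⁻¹' B j).indicator (fun _ => (1:ℝ≥0∞)) ω ∂μ := by
      intro j
      rw [lintegral_indicator (hY (hB j))]
      simp
    rw [Finset.sum_congr rfl fun j _ => hind j, ← lintegral_finset_sum]
    · congr 1; funext ω
      rw [Finset.card_filter]
      push_cast
      apply Finset.sum_congr rfl
      intro j _
      by_cases hj : Y ω ∈ B j <;> simp [Set.indicator_apply, hj]
    · exact fun j _ => measurable_one.indicator (hY (hB j))
  set k : ℕ := ⌈c⌉₊ - 1 with hk
  have hceil1 : 1 ≤ ⌈c⌉₊ := Nat.one_le_ceil_iff.mpr hc0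
  have hcard_le : ∀ ω, (univ.filter fun j : Fin (n+1) => Y ω ∈ B j).card ≤ k := by
    intro ω
    have h := ConformalAux.count_small g n (Y ω) hc0
    have heq : (univ.filter fun j : Fin (n+1) => Y ω ∈ B j) =
        univ.filter fun j => ((ConformalAux.rk g n (Y ω) j : ℝ) < c) := rfl
    rw [heq]
    have hlt : (univ.filter fun j => ((ConformalAux.rk g n (Y ω) j : ℝ) < c)).card < ⌈c⌉₊ :=
      Nat.lt_ceil.mpr h
    omega
  have hkc : (k : ℝ) ≤ c := by
    have h2 : (⌈c⌉₊ : ℝ) < c + 1 := Nat.ceil_lt_add_one hc0.le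
    have h3 : (k:ℝ) = (⌈c⌉₊ : ℝ) - 1 := by
      rw [hk, Nat.cast_sub hceil1]; simp
    linarith
  have hint : ∑ j : Fin (n+1), μ (Y ⁻¹' B j) ≤ (k : ℝ≥0∞) := by
    rw [hsum]
    calc ∫⁻ ω, ((univ.filter fun j : Fin (n+1) => Y ω ∈ B j).card : ℝ≥0∞) ∂μ
        ≤ ∫⁻ _, (k:ℝ≥0∞) ∂μ :=
          lintegral_mono fun ω => by dsimp only; exact_mod_cast Nat.cast_le.mpr (hcard_le ω)
      _ = (k : ℝ≥0∞) := by simp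
  have hsum2 : ∑ j : Fin (n+1), μ (Y ⁻¹' B j) =
      ((n:ℝ≥0∞)+1) * μ (Y ⁻¹' B (Fin.last n)) := by
    rw [Finset.sum_congr rfl fun j _ => key j, Finset.sum_const, Finset.card_univ,
      Fintype.card_fin, nsmul_eq_mul]
    push_cast
    ring
  have hmain : μ (Y ⁻¹' B (Fin.last n)) ≤ ENNReal.ofReal α := by
    have h1 : ((n:ℝ≥0∞)+1) * μ (Y ⁻¹' B (Fin.last n)) ≤ ((n:ℝ≥0∞)+1) * ENNReal.ofReal α := by
      rw [← hsum2]
      refine hint.trans ?_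
      have hcast : (k : ℝ≥0∞) = ENNReal.ofReal (k : ℝ) := by
        simp [ENNReal.ofReal_natCast]
      rw [hcast]
      calc ENNReal.ofReal (k:ℝ) ≤ ENNReal.ofReal c := ENNReal.ofReal_le_ofReal hkc
        _ = ENNReal.ofReal ((n:ℝ)+1) * ENNReal.ofReal α := by
            rw [← ENNReal.ofReal_mul (by positivity)]
            congr 1
            rw [hc]; ring
        _ = ((n:ℝ≥0∞)+1) * ENNReal.ofReal α := by
            congr 1
            rw [ENNReal.ofReal_add (by positivity) zero_le_one]
            simp [ENNReal.ofReal_natCast]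
    have hne0 : ((n:ℝ≥0∞)+1) ≠ 0 := by
      simp
    have hnetop : ((n:ℝ≥0∞)+1) ≠ ⊤ := by
      simp [ENNReal.add_eq_top]
    exact (ENNReal.mul_le_mul_iff_right hne0 hnetop).mp h1
  have hset : {ω | α ≤ ((Finset.univ.filter fun i =>
      g (X i ω) ≤ g (X (Fin.last n) ω)).card : ℝ) / (n + 1)}
      = (Y ⁻¹' B (Fin.last n))ᶜ := by
    ext ω
    simp only [Set.mem_setOf_eq, Set.mem_compl_iff, Set.mem_preimage, hBdef, not_lt]
    rw [le_div_iff₀ hn1]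
    have : ConformalAux.rk g n (Y ω) (Fin.last n) =
        (Finset.univ.filter fun i => g (X i ω) ≤ g (X (Fin.last n) ω)).card := rfl
    rw [this, hc]
  rw [hset, measure_compl (hY (hB _)) (measure_ne_top μ _), measure_univ]
  calc ENNReal.ofReal (1 - α) = 1 - ENNReal.ofReal α := by
        rw [ENNReal.ofReal_sub _ hα0.le, ENNReal.ofReal_one]
    _ ≤ 1 - μ (Y ⁻¹' B (Fin.last n)) := tsub_le_tsub_left hmain 1
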